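/- Properties of the D-tilted information density: under the stated regularity assumptions, (a) R(P_X,D) = E_{X∼P_X}[ȷ(X|D,P_X)], and (b) for every x̂ ∈ X̂, E_{X∼P_X}[ exp(λ* D − λ* d(X,x̂) + ȷ(X|D,P_X)) ] ≤ 1, with equality whenever x̂ ∈ supp(P*_{X̂}). -/

import Mathlib

/-!
Properties of the `D`-tilted information density
(Csiszár; Lemma `prop:dtilteddensity`, claims (ii) and (iii)).
-/

open scoped BigOperators

noncomputable section

/-- A conditional pmf (test channel). -/
def IsChannel {α β : Type*} [Fintype β] (W : α → β → ℝ) : Prop :=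
  ∀ a, (∀ b, 0 ≤ W a b) ∧ ∑ b, W a b = 1

/-- Mutual information `I(p, W)`. -/
def mutInfo {α β : Type*} [Fintype α] [Fintype β] (p : α → ℝ) (W : α → β → ℝ) : ℝ :=
  ∑ a, ∑ b, p a * W a b * Real.log (W a b / (∑ a', p a' * W a' b))

/-- The rate-distortion function `R(p, D)`. -/
def RDfun {α β : Type*} [Fintype α] [Fintype β] (p : α → ℝ) (d : α → β → ℝ) (D : ℝ) : ℝ :=
  sInf {r | ∃ W : α → β → ℝ, IsChannel W ∧
    (∑ a, ∑ b, p a * W a b * d a b) ≤ D ∧ r = mutInfo p W}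

/-- Output marginal induced by a source pmf and a channel. -/
def outMarg {α β : Type*} [Fintype α] (p : α → ℝ) (W : α → β → ℝ) : β → ℝ :=
  fun b => ∑ a, p a * W a b

/-- The `D`-tilted information density
`ȷ(x|D,P) = −log E_{X̂∼Q}[exp(λ D − λ d(x,X̂))]`. -/
def dtilted {α β : Type*} [Fintype β] (d : α → β → ℝ) (D : ℝ) (Q : β → ℝ) (lam : ℝ) :
    α → ℝ :=
  fun x => -Real.log (∑ y, Q y * Real.exp (lam * D - lam * d x y))

open Filter Asymptotics

lemma aux_log_ineq {w m : ℝ} (hw : 0 < w) (hm : 0 < m) :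
    w - m ≤ w * Real.log (w / m) := by
  have h := Real.log_le_sub_one_of_pos (x := m / w) (by positivity)
  have h2 : Real.log (w / m) = - Real.log (m / w) := by
    rw [← Real.log_inv]
    congr 1
    field_simp
  have h3 : w * Real.log (m / w) ≤ w * (m / w - 1) :=
    mul_le_mul_of_nonneg_left h hw.le
  have h4 : w * (m / w - 1) = m - w := by field_simp
  rw [h2]
  nlinarith

lemma aux_log_ineq_strict {w m : ℝ} (hw : 0 < w) (hm : 0 < m) (hne : w ≠ m) :
    w - m < w * Real.log (w / m) := by
  have h := Real.log_lt_sub_one_of_pos (x := m / w) (by positivity)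
    (by
      intro h
      apply hne
      field_simp at h
      linarith)
  have h2 : Real.log (w / m) = - Real.log (m / w) := by
    rw [← Real.log_inv]; congr 1; field_simp
  have h3 : w * Real.log (m / w) < w * (m / w - 1) :=
    mul_lt_mul_of_pos_left h hw
  have h4 : w * (m / w - 1) = m - w := by field_simp
  rw [h2]; nlinarith

lemma aux_gibbs {β : Type*} [Fintype β] (w m : β → ℝ)
    (hw0 : ∀ y, 0 ≤ w y) (hm0 : ∀ y, 0 ≤ m y)
    (hw1 : ∑ y, w y = 1) (hm1 : ∑ y, m y = 1)
    (habs : ∀ y, 0 < w y → 0 < m y) :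
    (0 ≤ ∑ y, w y * Real.log (w y / m y)) ∧
    ((∑ y, w y * Real.log (w y / m y)) = 0 → ∀ y, w y = m y) := by
  set f : β → ℝ := fun y => w y * Real.log (w y / m y) - (w y - m y) with hf
  have hfnn : ∀ y, 0 ≤ f y := by
    intro y
    rcases eq_or_lt_of_le (hw0 y) with h | h
    · simp [hf, ← h, hm0 y]
    · have := aux_log_ineq h (habs y h)
      simp only [hf]; linarith
  have hsum : ∑ y, f y = ∑ y, w y * Real.log (w y / m y) := by
    simp only [hf, Finset.sum_sub_distrib, hw1, hm1]
    ring
  constructor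
  · rw [← hsum]; exact Finset.sum_nonneg fun y _ => hfnn y
  · intro h0 y
    have hz0 : ∑ y, f y = 0 := by rw [hsum, h0]
    have hz : ∀ y ∈ Finset.univ, f y = 0 :=
      (Finset.sum_eq_zero_iff_of_nonneg (fun y _ => hfnn y)).mp hz0
    have hy := hz y (Finset.mem_univ y)
    rcases eq_or_lt_of_le (hw0 y) with h | h
    · simp only [hf, ← h] at hy ⊢
      simp at hy
      linarith [hy]
    · by_contra hne
      have := aux_log_ineq_strict h (habs y h) hne
      simp only [hf] at hy
      linarith

lemma aux_mutInfo_le {α β : Type*} [Fintype α] [Fintype β]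
    (p : α → ℝ) (hp0 : ∀ a, 0 ≤ p a) (hp1 : ∑ a, p a = 1)
    (V : α → β → ℝ) (hV : IsChannel V)
    (Q' : β → ℝ) (hQ'0 : ∀ b, 0 ≤ Q' b) (hQ'1 : ∑ b, Q' b = 1)
    (habs : ∀ b, 0 < outMarg p V b → 0 < Q' b) :
    mutInfo p V ≤ ∑ a, ∑ b, p a * V a b * Real.log (V a b / Q' b) := by
  set Qt : β → ℝ := outMarg p V with hQt
  have hQt0 : ∀ b, 0 ≤ Qt b := fun b =>
    Finset.sum_nonneg fun a _ => mul_nonneg (hp0 a) ((hV a).1 b)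
  have hQt1 : ∑ b, Qt b = 1 := by
    rw [hQt]
    unfold outMarg
    rw [Finset.sum_comm]
    calc ∑ a, ∑ b, p a * V a b = ∑ a, p a * ∑ b, V a b := by
          congr 1; ext a; rw [Finset.mul_sum]
      _ = 1 := by simp only [(fun a => (hV a).2)]; simp [hp1]
  have key : ∀ a b, p a * V a b * Real.log (V a b / Q' b)
      - p a * V a b * Real.log (V a b / Qt b)
      = p a * V a b * (Real.log (Qt b) - Real.log (Q' b)) := by
    intro a b
    rcases eq_or_lt_of_le (mul_nonneg (hp0 a) ((hV a).1 b)) with h | h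
    · rw [← h]; ring
    · have hpa : 0 < p a := by
        rcases (hp0 a).lt_or_eq with h' | h'
        · exact h'
        · exfalso; rw [← h'] at h; simp at h
      have hVab : 0 < V a b := by
        rcases ((hV a).1 b).lt_or_eq with h' | h'
        · exact h'
        · exfalso; rw [← h'] at h; simp at h
      have hQtb : 0 < Qt b := lt_of_lt_of_le h (Finset.single_le_sum
        (f := fun a' => p a' * V a' b)
        (fun a' _ => mul_nonneg (hp0 a') ((hV a').1 b)) (Finset.mem_univ a))
      have hQ'b : 0 < Q' b := habs b hQtb
      rw [Real.log_div hVab.ne' hQ'b.ne', Real.log_div hVab.ne' hQtb.ne']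
      ring
  have hdiff : (∑ a, ∑ b, p a * V a b * Real.log (V a b / Q' b)) - mutInfo p V
      = ∑ b, Qt b * Real.log (Qt b / Q' b) := by
    unfold mutInfo
    rw [← Finset.sum_sub_distrib]
    simp only [← Finset.sum_sub_distrib]
    calc ∑ a, ∑ b, (p a * V a b * Real.log (V a b / Q' b)
          - p a * V a b * Real.log (V a b / (∑ a', p a' * V a' b)))
        = ∑ a, ∑ b, p a * V a b * (Real.log (Qt b) - Real.log (Q' b)) := by
          apply Finset.sum_congr rfl; intro a _
          apply Finset.sum_congr rfl; intro b _
          exact key a b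
      _ = ∑ b, (∑ a, p a * V a b) * (Real.log (Qt b) - Real.log (Q' b)) := by
          rw [Finset.sum_comm]
          congr 1; ext b; rw [Finset.sum_mul]
      _ = ∑ b, Qt b * Real.log (Qt b / Q' b) := by
          apply Finset.sum_congr rfl; intro b _
          have hQb : (∑ a, p a * V a b) = Qt b := rfl
          rw [hQb]
          rcases eq_or_lt_of_le (hQt0 b) with h | h
          · rw [← h]; ring
          · rw [Real.log_div h.ne' (habs b h).ne']
            try ring
  have hg := (aux_gibbs Qt Q' hQt0 hQ'0 hQt1 hQ'1 habs).1
  linarith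

lemma aux_mutInfo_nonneg {α β : Type*} [Fintype α] [Fintype β]
    (p : α → ℝ) (hp0 : ∀ a, 0 ≤ p a) (hp1 : ∑ a, p a = 1)
    (W : α → β → ℝ) (hW : IsChannel W) :
    0 ≤ mutInfo p W := by
  unfold mutInfo
  apply Finset.sum_nonneg
  intro x _
  rcases eq_or_lt_of_le (hp0 x) with h | h
  · apply le_of_eq
    symm
    apply Finset.sum_eq_zero
    intro y _
    rw [← h]; ring
  · have hcalc : ∑ y, p x * W x y * Real.log (W x y / (∑ x', p x' * W x' y))
        = p x * ∑ y, W x y * Real.log (W x y / (∑ x', p x' * W x' y)) := by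
      rw [Finset.mul_sum]
      apply Finset.sum_congr rfl
      intro y _; ring
    rw [hcalc]
    apply mul_nonneg h.le
    have hQt0 : ∀ y, (0:ℝ) ≤ ∑ x', p x' * W x' y := fun y =>
      Finset.sum_nonneg fun x' _ => mul_nonneg (hp0 x') ((hW x').1 y)
    have hQt1 : ∑ y, ∑ x', p x' * W x' y = 1 := by
      rw [Finset.sum_comm]
      calc ∑ x', ∑ y, p x' * W x' y = ∑ x', p x' * ∑ y, W x' y := by
            congr 1; ext x'; rw [Finset.mul_sum]
        _ = 1 := by simp only [(fun x' => (hW x').2)]; simp [hp1]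
    exact (aux_gibbs (W x) (fun y => ∑ x', p x' * W x' y) ((hW x).1) hQt0 ((hW x).2) hQt1
      (fun y hy => lt_of_lt_of_le (mul_pos h hy) (Finset.single_le_sum
        (f := fun x' => p x' * W x' y)
        (fun x' _ => mul_nonneg (hp0 x') ((hW x').1 y)) (Finset.mem_univ x)))).1

lemma aux_engine {A : ℝ → ℝ} {δ : ℝ} (hδ : 0 < δ)
    (hA : A =o[nhdsWithin (0:ℝ) (Set.Ioi 0)] (id : ℝ → ℝ))
    (h : ∀ᶠ s in nhdsWithin (0:ℝ) (Set.Ioi 0), s * δ ≤ |A s|) : False := by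
  have h2 := hA.bound (half_pos hδ)
  have h3 : ∀ᶠ s in nhdsWithin (0:ℝ) (Set.Ioi 0), s ∈ Set.Ioi (0:ℝ) :=
    self_mem_nhdsWithin
  obtain ⟨s, hs1, hs2, hs3⟩ := (h.and (h2.and h3)).exists
  simp only [Set.mem_Ioi] at hs3
  simp only [Real.norm_eq_abs, id_eq, abs_of_pos hs3] at hs2
  nlinarith


set_option maxHeartbeats 2000000

/-- **Properties of the `D`-tilted information density.**  Under the regularity
assumptions, (a) `R(P,D) = E[ȷ(X|D,P)]`; (b) for every `x̂`,
`E[exp(λ*D − λ*d(X,x̂) + ȷ(X|D,P))] ≤ 1`, with equality on the support of the optimal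
output marginal `P*_{X̂}`. -/
theorem dtilted_properties
    {𝒳 Xh : Type} [Fintype 𝒳] [Fintype Xh]
    (P : 𝒳 → ℝ) (hP0 : ∀ x, 0 ≤ P x) (hP1 : ∑ x, P x = 1)
    (d : 𝒳 → Xh → ℝ) (hd : ∀ x y, 0 ≤ d x y) (D : ℝ)
    (hreg : ContDiffAt ℝ 2 (fun q : (𝒳 → ℝ) × ℝ => RDfun q.1 d q.2) (P, D))
    (Wopt : 𝒳 → Xh → ℝ) (hWch : IsChannel Wopt)
    (hWd : (∑ x, ∑ y, P x * Wopt x y * d x y) ≤ D)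
    (hWopt : mutInfo P Wopt = RDfun P d D)
    (lam : ℝ) (hlam : HasDerivAt (fun D' => RDfun P d D') (-lam) D) (hlam0 : 0 ≤ lam) :
    (RDfun P d D = ∑ x, P x * dtilted d D (outMarg P Wopt) lam x) ∧
    (∀ yh : Xh,
      (∑ x, P x *
          Real.exp (lam * D - lam * d x yh + dtilted d D (outMarg P Wopt) lam x)) ≤ 1) ∧
    (∀ yh : Xh, 0 < outMarg P Wopt yh →
      (∑ x, P x *
          Real.exp (lam * D - lam * d x yh + dtilted d D (outMarg P Wopt) lam x)) = 1) := by
  classical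
  set Q : Xh → ℝ := outMarg P Wopt with hQdef
  set E : 𝒳 → Xh → ℝ := fun x y => Real.exp (lam * D - lam * d x y) with hEdef
  set g : 𝒳 → ℝ := fun x => ∑ y, Q y * E x y with hgdef
  set j : 𝒳 → ℝ := fun x => -Real.log (g x) with hjdef
  set M : 𝒳 → Xh → ℝ := fun x y => Q y * E x y / g x with hMdef
  set dst : (𝒳 → Xh → ℝ) → ℝ := fun W => ∑ x, ∑ y, P x * W x y * d x y with hdstdef
  set c : ℝ := ∑ x, P x * ∑ y, Wopt x y * Real.log (Wopt x y / M x y) with hcdef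
  have hE : ∀ x y, 0 < E x y := fun x y => Real.exp_pos _
  have hQ0 : ∀ y, 0 ≤ Q y := fun y =>
    Finset.sum_nonneg fun x _ => mul_nonneg (hP0 x) ((hWch x).1 y)
  have hQ1 : ∑ y, Q y = 1 := by
    rw [hQdef]
    unfold outMarg
    rw [Finset.sum_comm]
    calc ∑ x, ∑ y, P x * Wopt x y = ∑ x, P x * ∑ y, Wopt x y := by
          congr 1; ext x; rw [Finset.mul_sum]
      _ = 1 := by simp only [(fun x => (hWch x).2)]; simp [hP1]
  have hgpos : ∀ x, 0 < g x := by
    intro x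
    have hne : ∃ y, 0 < Q y := by
      by_contra hno
      push_neg at hno
      have : ∀ y, Q y = 0 := fun y => le_antisymm (hno y) (hQ0 y)
      rw [Finset.sum_congr rfl (fun y _ => this y)] at hQ1
      simp at hQ1
    obtain ⟨y0, hy0⟩ := hne
    rw [hgdef]
    apply Finset.sum_pos' (fun y _ => mul_nonneg (hQ0 y) (hE x y).le)
    exact ⟨y0, Finset.mem_univ y0, mul_pos hy0 (hE x y0)⟩
  have hjd : ∀ x, dtilted d D Q lam x = j x := fun x => rfl
  have hexp : ∀ x y, Real.exp (lam * D - lam * d x y + j x) = E x y / g x := by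
    intro x y
    rw [hjdef]
    simp only [Real.exp_add, Real.exp_neg, Real.exp_log (hgpos x)]
    rw [hEdef]
    simp [div_eq_mul_inv]
  have hM0 : ∀ x y, 0 ≤ M x y := fun x y =>
    div_nonneg (mul_nonneg (hQ0 y) (hE x y).le) (hgpos x).le
  have hMsum : ∀ x, ∑ y, M x y = 1 := by
    intro x
    rw [hMdef]
    simp only
    rw [← Finset.sum_div]
    have hnum : (∑ i, Q i * E x i) = g x := rfl
    rw [hnum, div_self (hgpos x).ne']
  have hMpos : ∀ x y, 0 < Q y → 0 < M x y := fun x y hy =>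
    div_pos (mul_pos hy (hE x y)) (hgpos x)
  have hMzero : ∀ x y, Q y = 0 → M x y = 0 := by
    intro x y hy
    rw [hMdef]
    simp [hy]
  have hQW : ∀ x y, 0 < P x → 0 < Wopt x y → 0 < Q y := by
    intro x y hP hW
    refine lt_of_lt_of_le (mul_pos hP hW) ?_
    exact Finset.single_le_sum (f := fun x' => P x' * Wopt x' y)
      (fun x' _ => mul_nonneg (hP0 x') ((hWch x').1 y)) (Finset.mem_univ x)
  have hMch : IsChannel M := fun x => ⟨hM0 x, hMsum x⟩
  have hjx : ∀ x, j x = -Real.log (g x) := fun _ => rfl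
  have hMx : ∀ x y, M x y = Q y * E x y / g x := fun _ _ => rfl
  have hEx : ∀ x y, E x y = Real.exp (lam * D - lam * d x y) := fun _ _ => rfl
  have hdstW : ∀ (W : 𝒳 → Xh → ℝ), dst W = ∑ x, ∑ y, P x * W x y * d x y := fun _ => rfl
  -- the fundamental identity
  have hmut : mutInfo P Wopt = ∑ x, ∑ y, P x * Wopt x y * Real.log (Wopt x y / Q y) := rfl
  have hlogM : ∀ x y, 0 < Q y → Real.log (M x y)
      = Real.log (Q y) + (lam * D - lam * d x y) - Real.log (g x) := by
    intro x y hQy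
    rw [hMx x y, Real.log_div (by positivity) (hgpos x).ne',
      Real.log_mul hQy.ne' (hE x y).ne', hEx x y, Real.log_exp]
  have key : ∀ x y, P x * Wopt x y * Real.log (Wopt x y / Q y)
      = Wopt x y * Real.log (Wopt x y / M x y) * P x
        + P x * Wopt x y * (lam * D - lam * d x y + j x) := by
    intro x y
    rcases eq_or_lt_of_le (mul_nonneg (hP0 x) ((hWch x).1 y)) with h | h
    · rcases mul_eq_zero.mp h.symm with h0 | h0 <;> rw [h0] <;> ring
    · have hPx : 0 < P x := by
        rcases (hP0 x).lt_or_eq with h' | h'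
        · exact h'
        · exfalso; rw [← h'] at h; simp at h
      have hW : 0 < Wopt x y := by
        rcases ((hWch x).1 y).lt_or_eq with h' | h'
        · exact h'
        · exfalso; rw [← h'] at h; simp at h
      have hQy := hQW x y hPx hW
      have hMy := hMpos x y hQy
      rw [Real.log_div hW.ne' hQy.ne', Real.log_div hW.ne' hMy.ne',
        hlogM x y hQy, hjx x]
      ring
  have hRc : mutInfo P Wopt = c + (lam * D - lam * dst Wopt) + ∑ x, P x * j x := by
    rw [hmut, hcdef, hdstW Wopt]
    have h2 : ∀ x, ∑ y, P x * Wopt x y * (lam * D - lam * d x y + j x)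
        = P x * (lam * D + j x) - lam * ∑ y, P x * Wopt x y * d x y := by
      intro x
      have hsy : ∑ y, Wopt x y = 1 := (hWch x).2
      calc ∑ y, P x * Wopt x y * (lam * D - lam * d x y + j x)
          = (∑ y, Wopt x y) * (P x * (lam * D + j x))
            - lam * ∑ y, P x * Wopt x y * d x y := by
            rw [Finset.sum_mul, Finset.mul_sum, ← Finset.sum_sub_distrib]
            apply Finset.sum_congr rfl; intro y _; ring
        _ = _ := by rw [hsy]; ring
    calc ∑ x, ∑ y, P x * Wopt x y * Real.log (Wopt x y / Q y)
        = ∑ x, (P x * ∑ y, Wopt x y * Real.log (Wopt x y / M x y)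
            + ∑ y, P x * Wopt x y * (lam * D - lam * d x y + j x)) := by
          apply Finset.sum_congr rfl; intro x _
          rw [Finset.mul_sum, ← Finset.sum_add_distrib]
          apply Finset.sum_congr rfl; intro y _
          rw [key x y]; ring
      _ = (∑ x, P x * ∑ y, Wopt x y * Real.log (Wopt x y / M x y))
          + ∑ x, (P x * (lam * D + j x) - lam * ∑ y, P x * Wopt x y * d x y) := by
          rw [← Finset.sum_add_distrib]
          apply Finset.sum_congr rfl; intro x _
          rw [h2 x]
      _ = _ := by
          rw [Finset.sum_sub_distrib]
          have h3 : ∑ x, P x * (lam * D + j x) = lam * D + ∑ x, P x * j x := by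
            calc ∑ x, P x * (lam * D + j x) = ∑ x, (P x * (lam * D) + P x * j x) := by
                  apply Finset.sum_congr rfl; intro x _; ring
              _ = (∑ x, P x) * (lam * D) + ∑ x, P x * j x := by
                  rw [Finset.sum_add_distrib, Finset.sum_mul]
              _ = _ := by rw [hP1]; ring
          rw [h3, Finset.mul_sum]
          ring
  have hc0 : 0 ≤ c := by
    rw [hcdef]
    apply Finset.sum_nonneg; intro x _
    rcases eq_or_lt_of_le (hP0 x) with h | h
    · rw [← h]; simp
    · apply mul_nonneg h.le
      exact (aux_gibbs (Wopt x) (M x) ((hWch x).1) (hM0 x) ((hWch x).2) (hMsum x)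
        (fun y hy => hMpos x y (hQW x y h hy))).1
  have hbdd : ∀ D' : ℝ, BddBelow {r | ∃ W : 𝒳 → Xh → ℝ, IsChannel W ∧
      (∑ a, ∑ b, P a * W a b * d a b) ≤ D' ∧ r = mutInfo P W} := by
    intro D'
    refine ⟨0, ?_⟩
    rintro r ⟨W, hch, hdist, rfl⟩
    exact aux_mutInfo_nonneg P hP0 hP1 W hch
  have hfeas : ∀ (V : 𝒳 → Xh → ℝ) (D' : ℝ), IsChannel V → dst V ≤ D' →
      RDfun P d D' ≤ mutInfo P V := by
    intro V D' hch hle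
    exact csInf_le (hbdd D') ⟨V, hch, hle, rfl⟩
  have hslack : lam * (D - dst Wopt) = 0 := by
    rcases eq_or_lt_of_le hlam0 with h0 | hpos
    · rw [← h0]; ring
    · have hdd : dst Wopt = D := by
        by_contra hne
        have hlt : dst Wopt < D := lt_of_le_of_ne hWd hne
        have hconst : ∀ D' ∈ Set.Ioo (dst Wopt) D, RDfun P d D' = RDfun P d D := by
          intro D' hD'
          apply le_antisymm
          · rw [← hWopt]
            exact hfeas Wopt D' hWch hD'.1.le
          · refine csInf_le_csInf (hbdd D) ?_ ?_
            · exact ⟨mutInfo P Wopt, Wopt, hWch, hD'.1.le, rfl⟩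
            · rintro r ⟨W, hch, hdist, rfl⟩
              exact ⟨W, hch, hdist.trans hD'.2.le, rfl⟩
        have hs := hasDerivAt_iff_tendsto_slope.mp hlam
        have hmono : nhdsWithin D (Set.Iio D) ≤ nhdsWithin D {D}ᶜ :=
          nhdsWithin_mono _ (fun x hx => ne_of_lt hx)
        have hs2 : Tendsto (slope (fun D' => RDfun P d D') D)
            (nhdsWithin D (Set.Iio D)) (nhds (-lam)) := hs.mono_left hmono
        have hev : slope (fun D' => RDfun P d D') D =ᶠ[nhdsWithin D (Set.Iio D)]
            fun _ => (0:ℝ) := by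
          filter_upwards [Ioo_mem_nhdsLT_of_mem (Set.mem_Ioc.mpr ⟨hlt, le_refl D⟩)] with x hx
          rw [slope_def_field, hconst x hx, sub_self, zero_div]
        have hs3 : Tendsto (fun _ : ℝ => (0:ℝ)) (nhdsWithin D (Set.Iio D)) (nhds (-lam)) :=
          Filter.Tendsto.congr' hev hs2
        have hz : (-lam:ℝ) = 0 := tendsto_nhds_unique hs3 tendsto_const_nhds
        linarith
      rw [hdd]; ring
  have hφ : (fun u => RDfun P d (D + u) - RDfun P d D + lam * u) =o[nhds 0] (id : ℝ → ℝ) := by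
    have h := hasDerivAt_iff_isLittleO_nhds_zero.mp hlam
    have heqf : (fun u => RDfun P d (D + u) - RDfun P d D + lam * u)
        = (fun h : ℝ => RDfun P d (D + h) - RDfun P d D - h • (-lam)) := by
      funext u; simp only [smul_eq_mul]; ring
    rw [heqf]
    exact h
  -- affine derivative helper
  have haff : ∀ (t a b : ℝ), HasDerivAt (fun s : ℝ => (1 - s) * a + s * b) (b - a) t := by
    intro t a b
    have h := (((hasDerivAt_id t).const_sub 1).mul_const a).add ((hasDerivAt_id t).mul_const b)
    rw [show b - a = -1 * a + 1 * b by ring]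
    exact h
  -- splitting the tilted cross-sum
  have hsplit : ∀ (V : 𝒳 → Xh → ℝ) (Q' : Xh → ℝ),
      ∑ x, ∑ y, P x * (V x y * Real.log (V x y / Q' y) + lam * d x y * V x y)
      = (∑ x, ∑ y, P x * V x y * Real.log (V x y / Q' y)) + lam * dst V := by
    intro V Q'
    rw [hdstW V, Finset.mul_sum, ← Finset.sum_add_distrib]
    apply Finset.sum_congr rfl; intro x _
    rw [Finset.mul_sum, ← Finset.sum_add_distrib]
    apply Finset.sum_congr rfl; intro y _
    ring
  -- generic lower bound along a perturbation family
  have hlowgen : ∀ (Vf : ℝ → 𝒳 → Xh → ℝ), (∀ s ∈ Set.Ioo (0:ℝ) 1, IsChannel (Vf s)) →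
      (∃ k, HasDerivAt (fun s => dst (Vf s)) k 0) → dst (Vf 0) = D →
      ∃ A : ℝ → ℝ, (A =o[nhdsWithin (0:ℝ) (Set.Ioi 0)] (id : ℝ → ℝ)) ∧
        ∀ᶠ s in nhdsWithin (0:ℝ) (Set.Ioi 0),
          RDfun P d D + lam * D - A s ≤ mutInfo P (Vf s) + lam * dst (Vf s) := by
    rintro Vf hch ⟨k, hk⟩ h0
    set u : ℝ → ℝ := fun s => dst (Vf s) - D with hudef
    have hu0 : Tendsto u (nhdsWithin (0:ℝ) (Set.Ioi 0)) (nhds 0) := by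
      have hc : Tendsto (fun s => dst (Vf s)) (nhds 0) (nhds (dst (Vf 0))) :=
        hk.continuousAt.tendsto
      rw [h0] at hc
      have : Tendsto u (nhds 0) (nhds 0) := by
        rw [hudef]
        simpa using hc.sub_const D
      exact this.mono_left nhdsWithin_le_nhds
    have hO : u =O[nhdsWithin (0:ℝ) (Set.Ioi 0)] (id : ℝ → ℝ) := by
      have h1 := hk.hasFDerivAt.isBigO_sub
      have h2 : (fun s => dst (Vf s) - dst (Vf 0)) =O[nhds 0] (id : ℝ → ℝ) := by
        exact (by simpa using h1 : _ =O[nhds 0] (fun x : ℝ => x))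
      rw [hudef]
      rw [h0] at h2
      exact h2.mono nhdsWithin_le_nhds
    have hAo : (fun s => |RDfun P d (D + u s) - RDfun P d D + lam * u s|)
        =o[nhdsWithin (0:ℝ) (Set.Ioi 0)] (id : ℝ → ℝ) := by
      have hcomp := hφ.comp_tendsto hu0
      simp only [Function.comp_def] at hcomp
      exact (hcomp.trans_isBigO hO).abs_left
    refine ⟨_, hAo, ?_⟩
    filter_upwards [Ioo_mem_nhdsGT_of_mem (Set.mem_Ico.mpr ⟨le_refl (0:ℝ), zero_lt_one⟩),
      self_mem_nhdsWithin] with s hs _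
    have hchs := hch s hs
    have hRD := hfeas (Vf s) (dst (Vf s)) hchs (le_refl _)
    have hDu : D + u s = dst (Vf s) := by rw [hudef]; ring
    have h2 : RDfun P d (D + u s) + lam * (D + u s) ≤ mutInfo P (Vf s) + lam * dst (Vf s) := by
      rw [hDu]; linarith [hRD]
    have h3 := neg_abs_le (RDfun P d (D + u s) - RDfun P d D + lam * u s)
    linarith
  have hW0 : ∀ x y, ¬ 0 < Wopt x y → Wopt x y = 0 :=
    fun x y h => le_antisymm (not_lt.mp h) ((hWch x).1 y)
  have hM0' : ∀ x y, ¬ 0 < M x y → M x y = 0 :=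
    fun x y h => le_antisymm (not_lt.mp h) (hM0 x y)
  have hQM : ∀ x y, 0 < M x y → 0 < Q y := by
    intro x y hMy
    rcases (hQ0 y).lt_or_eq with h | h
    · exact h
    · exfalso; rw [hMzero x y h.symm] at hMy; simp at hMy
  have hcle : c ≤ 0 := by
    by_contra hcpos'
    push_neg at hcpos'
    have hcpos : 0 < c := hcpos'
    set Vf : ℝ → 𝒳 → Xh → ℝ := fun s x y => (1 - s) * Wopt x y + s * M x y with hVfdef
    have hVfx : ∀ s x y, Vf s x y = (1 - s) * Wopt x y + s * M x y := fun _ _ _ => rfl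
    have hVf0 : ∀ x y, Vf 0 x y = Wopt x y := by intro x y; rw [hVfx]; ring
    have hVch : ∀ s ∈ Set.Icc (0:ℝ) 1, IsChannel (Vf s) := by
      intro s hs x
      constructor
      · intro y
        rw [hVfx]
        have h1 := (hWch x).1 y
        have h2 := hM0 x y
        nlinarith [hs.1, hs.2]
      · calc ∑ y, Vf s x y
              = (1 - s) * ∑ y, Wopt x y + s * ∑ y, M x y := by
                rw [Finset.mul_sum, Finset.mul_sum, ← Finset.sum_add_distrib]
          _ = 1 := by rw [(hWch x).2, hMsum x]; ring
    have hdstlin : ∀ s, dst (Vf s) = (1 - s) * dst Wopt + s * dst M := by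
      intro s
      rw [hdstW (Vf s), hdstW Wopt, hdstW M, Finset.mul_sum, Finset.mul_sum,
        ← Finset.sum_add_distrib]
      apply Finset.sum_congr rfl; intro x _
      rw [Finset.mul_sum, Finset.mul_sum, ← Finset.sum_add_distrib]
      apply Finset.sum_congr rfl; intro y _
      rw [hVfx]; ring
    have hlow : ∃ A : ℝ → ℝ, (A =o[nhdsWithin (0:ℝ) (Set.Ioi 0)] (id : ℝ → ℝ)) ∧
        ∀ᶠ s in nhdsWithin (0:ℝ) (Set.Ioi 0),
          RDfun P d D + lam * D - A s ≤ mutInfo P (Vf s) + lam * dst (Vf s) := by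
      rcases eq_or_lt_of_le (show dst Wopt ≤ D from hWd) with hDW | hDW
      · refine hlowgen Vf (fun s hs => hVch s ⟨hs.1.le, hs.2.le⟩) ⟨dst M - dst Wopt, ?_⟩ ?_
        · have hfuneq : (fun s => dst (Vf s)) = (fun s => (1 - s) * dst Wopt + s * dst M) :=
            funext hdstlin
          rw [hfuneq]
          exact haff 0 _ _
        · rw [hdstlin 0, ← hDW]; ring
      · have hl0 : lam = 0 := by
          rcases mul_eq_zero.mp hslack with h | h
          · exact h
          · exfalso
            have : dst Wopt = D := by linarith
            linarith
        refine ⟨fun _ => (0:ℝ), isLittleO_zero _ _, ?_⟩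
        have htd : Tendsto (fun s => dst (Vf s)) (nhdsWithin (0:ℝ) (Set.Ioi 0))
            (nhds (dst Wopt)) := by
          have hcont : Continuous (fun s : ℝ => (1 - s) * dst Wopt + s * dst M) :=
            ((continuous_const.sub continuous_id).mul continuous_const).add
              (continuous_id.mul continuous_const)
          have ht := hcont.tendsto 0
          have hval : (1 - (0:ℝ)) * dst Wopt + 0 * dst M = dst Wopt := by ring
          rw [hval] at ht
          have hfuneq : (fun s => dst (Vf s)) = (fun s => (1 - s) * dst Wopt + s * dst M) :=
            funext hdstlin
          rw [hfuneq]
          exact ht.mono_left nhdsWithin_le_nhds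
        filter_upwards [htd.eventually_lt_const hDW,
          Ioo_mem_nhdsGT_of_mem (Set.mem_Ico.mpr ⟨le_refl (0:ℝ), zero_lt_one⟩)] with s hlt hs
        have hRD := hfeas (Vf s) D (hVch s ⟨hs.1.le, hs.2.le⟩) hlt.le
        rw [hl0]
        simpa using hRD
    obtain ⟨A, hAo, hAev⟩ := hlow
    -- upper bound machinery
    set S : 𝒳 → Finset Xh := fun x => Finset.univ.filter (fun y => 0 < Wopt x y) with hSdef
    set Bf : 𝒳 → Finset Xh :=
      fun x => Finset.univ.filter (fun y => ¬ 0 < Wopt x y ∧ 0 < M x y) with hBdef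
    have hSmem : ∀ x y, y ∈ S x ↔ 0 < Wopt x y := by
      intro x y; rw [hSdef]; simp
    have hBmem : ∀ x y, y ∈ Bf x ↔ (¬ 0 < Wopt x y ∧ 0 < M x y) := by
      intro x y; rw [hBdef]; simp
    set G : ℝ → ℝ := fun s => ∑ x, P x * ∑ y ∈ S x,
        (Vf s x y * (Real.log (Vf s x y) - Real.log (Q y)) + lam * d x y * Vf s x y) with hGdef
    set Gd : ℝ := ∑ x, P x * ∑ y ∈ S x,
        (M x y - Wopt x y) * (Real.log (Wopt x y) - Real.log (Q y) + 1 + lam * d x y) with hGddef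
    set μ : ℝ := ∑ x, P x * ∑ y ∈ Bf x, M x y with hμdef
    set ν : ℝ := ∑ x, P x * ∑ y ∈ Bf x,
        M x y * (Real.log (M x y) - Real.log (Q y) + lam * d x y) with hνdef
    have hE1 : ∀ s, 0 ≤ s → s < 1 →
        (∑ x, ∑ y, P x * (Vf s x y * Real.log (Vf s x y / Q y) + lam * d x y * Vf s x y))
        = G s + (s * Real.log s) * μ + s * ν := by
      intro s hs0 hs1
      rw [hGdef, hμdef, hνdef]
      simp only
      rw [Finset.mul_sum, Finset.mul_sum, ← Finset.sum_add_distrib, ← Finset.sum_add_distrib]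
      apply Finset.sum_congr rfl
      intro x _
      rcases eq_or_lt_of_le (hP0 x) with hPx | hPx
      · rw [← hPx]; simp
      · have hstep1 := Finset.sum_filter_add_sum_filter_not Finset.univ
          (fun y => 0 < Wopt x y)
          (fun y => P x * (Vf s x y * Real.log (Vf s x y / Q y) + lam * d x y * Vf s x y))
        have hstep2 := Finset.sum_filter_add_sum_filter_not
          (Finset.univ.filter (fun y => ¬ 0 < Wopt x y)) (fun y => 0 < M x y)
          (fun y => P x * (Vf s x y * Real.log (Vf s x y / Q y) + lam * d x y * Vf s x y))
        have hBf_eq : (Finset.univ.filter (fun y => ¬ 0 < Wopt x y)).filter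
            (fun y => 0 < M x y) = Bf x := by
          rw [Finset.filter_filter, hBdef]
        have hrest : ∑ y ∈ (Finset.univ.filter (fun y => ¬ 0 < Wopt x y)).filter
            (fun y => ¬ 0 < M x y),
            P x * (Vf s x y * Real.log (Vf s x y / Q y) + lam * d x y * Vf s x y) = 0 := by
          apply Finset.sum_eq_zero
          intro y hy
          rw [Finset.mem_filter] at hy
          obtain ⟨hy1, hy2⟩ := hy
          rw [Finset.mem_filter] at hy1
          have hw := hW0 x y hy1.2
          have hm := hM0' x y hy2
          rw [hVfx, hw, hm]
          simp
        have hSpart : ∑ y ∈ S x,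
            P x * (Vf s x y * Real.log (Vf s x y / Q y) + lam * d x y * Vf s x y)
            = P x * ∑ y ∈ S x,
              (Vf s x y * (Real.log (Vf s x y) - Real.log (Q y)) + lam * d x y * Vf s x y) := by
          rw [Finset.mul_sum]
          apply Finset.sum_congr rfl
          intro y hy
          have hWy : 0 < Wopt x y := (hSmem x y).mp hy
          have hQy : 0 < Q y := hQW x y hPx hWy
          have hVpos : 0 < Vf s x y := by
            rw [hVfx]
            nlinarith [hM0 x y]
          rw [Real.log_div hVpos.ne' hQy.ne']
        have hBpart : ∑ y ∈ Bf x,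
            P x * (Vf s x y * Real.log (Vf s x y / Q y) + lam * d x y * Vf s x y)
            = (s * Real.log s) * (P x * ∑ y ∈ Bf x, M x y)
              + s * (P x * ∑ y ∈ Bf x,
                M x y * (Real.log (M x y) - Real.log (Q y) + lam * d x y)) := by
          rcases eq_or_lt_of_le hs0 with hseq | hspos
          · rw [← hseq]
            simp only [Real.log_zero, mul_zero, zero_mul, zero_add, zero_mul]
            apply Finset.sum_eq_zero
            intro y hy
            have hw := hW0 x y ((hBmem x y).mp hy).1
            rw [hVfx, hw]
            simp
          · rw [Finset.mul_sum, Finset.mul_sum, Finset.mul_sum, Finset.mul_sum,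
              ← Finset.sum_add_distrib]
            apply Finset.sum_congr rfl
            intro y hy
            obtain ⟨hyW, hyM⟩ := (hBmem x y).mp hy
            have hw := hW0 x y hyW
            have hQy : 0 < Q y := hQM x y hyM
            have hVs : Vf s x y = s * M x y := by rw [hVfx, hw]; ring
            rw [hVs, Real.log_div (by positivity) hQy.ne',
              Real.log_mul hspos.ne' hyM.ne']
            ring
        calc ∑ y, P x * (Vf s x y * Real.log (Vf s x y / Q y) + lam * d x y * Vf s x y)
            = (∑ y ∈ S x, P x * (Vf s x y * Real.log (Vf s x y / Q y) + lam * d x y * Vf s x y))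
              + ((∑ y ∈ Bf x, P x * (Vf s x y * Real.log (Vf s x y / Q y)
                  + lam * d x y * Vf s x y)) + 0) := by
              rw [← hrest, ← hstep1]
              congr 1
              rw [← hstep2, hBf_eq]
          _ = _ := by
              rw [hSpart, hBpart]
              ring
    have hE2 : HasDerivAt G Gd 0 := by
      rw [hGdef, hGddef]
      apply HasDerivAt.fun_sum
      intro x _
      apply HasDerivAt.const_mul
      apply HasDerivAt.fun_sum
      intro y hy
      have hWy : 0 < Wopt x y := (hSmem x y).mp hy
      have hv : HasDerivAt (fun s => Vf s x y) (M x y - Wopt x y) 0 := haff 0 _ _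
      have hv0 : Vf 0 x y = Wopt x y := hVf0 x y
      have hlog : HasDerivAt (fun s => Real.log (Vf s x y))
          ((M x y - Wopt x y) / Vf 0 x y) 0 := hv.log (by rw [hv0]; exact hWy.ne')
      have ht := (hv.mul (hlog.sub_const (Real.log (Q y)))).add
        (hv.const_mul (lam * d x y))
      refine HasDerivAt.congr_deriv ht ?_
      rw [hv0]
      field_simp
    have hμnonneg : 0 ≤ μ := by
      rw [hμdef]
      apply Finset.sum_nonneg
      intro x _
      exact mul_nonneg (hP0 x) (Finset.sum_nonneg fun y _ => hM0 x y)
    have hBempty : μ = 0 → ∀ x, 0 < P x → Bf x = ∅ := by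
      intro hμ x hPx
      have hterms : ∀ x' ∈ Finset.univ, 0 ≤ P x' * ∑ y ∈ Bf x', M x' y :=
        fun x' _ => mul_nonneg (hP0 x') (Finset.sum_nonneg fun y _ => hM0 x' y)
      have hμ' : ∑ x', P x' * ∑ y ∈ Bf x', M x' y = 0 := by rw [← hμdef]; exact hμ
      have hxz := (Finset.sum_eq_zero_iff_of_nonneg hterms).mp hμ' x (Finset.mem_univ x)
      have hsum0 : ∑ y ∈ Bf x, M x y = 0 := by
        rcases mul_eq_zero.mp hxz with h | h
        · exact absurd h hPx.ne'
        · exact h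
      rw [Finset.eq_empty_iff_forall_notMem]
      intro y hy
      have hMy := ((hBmem x y).mp hy).2
      have hz := (Finset.sum_eq_zero_iff_of_nonneg (fun y _ => hM0 x y)).mp hsum0 y hy
      linarith
    have hνzero : μ = 0 → ν = 0 := by
      intro hμ
      rw [hνdef]
      apply Finset.sum_eq_zero
      intro x _
      rcases eq_or_lt_of_le (hP0 x) with h | h
      · rw [← h]; ring
      · rw [hBempty hμ x h]
        simp
    have hWsumS : ∀ x, ∑ y ∈ S x, Wopt x y = 1 := by
      intro x
      have hsp := Finset.sum_filter_add_sum_filter_not Finset.univ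
        (fun y => 0 < Wopt x y) (Wopt x)
      have hz : ∑ y ∈ Finset.univ.filter (fun y => ¬ 0 < Wopt x y), Wopt x y = 0 :=
        Finset.sum_eq_zero fun y hy => hW0 x y (Finset.mem_filter.mp hy).2
      have hSxeq : Finset.univ.filter (fun y => 0 < Wopt x y) = S x := by rw [hSdef]
      rw [hSxeq, hz] at hsp
      rw [← (hWch x).2]
      linarith [hsp]
    have hMsumS : ∀ x, Bf x = ∅ → ∑ y ∈ S x, M x y = 1 := by
      intro x hB
      have hsp := Finset.sum_filter_add_sum_filter_not Finset.univ
        (fun y => 0 < Wopt x y) (M x)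
      have hsp2 := Finset.sum_filter_add_sum_filter_not
        (Finset.univ.filter (fun y => ¬ 0 < Wopt x y)) (fun y => 0 < M x y) (M x)
      have hBf_eq : (Finset.univ.filter (fun y => ¬ 0 < Wopt x y)).filter
          (fun y => 0 < M x y) = Bf x := by
        rw [Finset.filter_filter, hBdef]
      have hz2 : ∑ y ∈ (Finset.univ.filter (fun y => ¬ 0 < Wopt x y)).filter
          (fun y => ¬ 0 < M x y), M x y = 0 :=
        Finset.sum_eq_zero fun y hy => hM0' x y (Finset.mem_filter.mp hy).2
      rw [hBf_eq, hB, hz2] at hsp2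
      rw [Finset.sum_empty, zero_add] at hsp2
      have hSxeq : Finset.univ.filter (fun y => 0 < Wopt x y) = S x := by rw [hSdef]
      rw [hSxeq, ← hsp2] at hsp
      rw [← hMsum x]
      linarith [hsp]
    have hE3 : μ = 0 → Gd ≤ -c := by
      intro hμ
      have hmc : -c = ∑ x, P x * -(∑ y, Wopt x y * Real.log (Wopt x y / M x y)) := by
        rw [hcdef, ← Finset.sum_neg_distrib]
        apply Finset.sum_congr rfl
        intro x _
        ring
      rw [hGddef, hmc]
      apply Finset.sum_le_sum
      intro x _
      rcases eq_or_lt_of_le (hP0 x) with h | h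
      · rw [← h]; simp
      · apply mul_le_mul_of_nonneg_left _ h.le
        have hB := hBempty hμ x h
        have hWS := hWsumS x
        have hMS := hMsumS x hB
        have hbr : ∀ y ∈ S x, (M x y - Wopt x y) *
            (Real.log (Wopt x y) - Real.log (Q y) + 1 + lam * d x y)
            = (M x y - Wopt x y) * (Real.log (Wopt x y) - Real.log (M x y))
              + (M x y - Wopt x y) * (lam * D + j x + 1) := by
          intro y hy
          have hWy := (hSmem x y).mp hy
          have hQy := hQW x y h hWy
          rw [hlogM x y hQy, hjx x]
          ring
        rw [Finset.sum_congr rfl hbr, Finset.sum_add_distrib]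
        have hzero : ∑ y ∈ S x, (M x y - Wopt x y) * (lam * D + j x + 1) = 0 := by
          rw [← Finset.sum_mul, Finset.sum_sub_distrib, hWS, hMS]
          ring
        rw [hzero, add_zero]
        have hKLrw : ∑ y, Wopt x y * Real.log (Wopt x y / M x y)
            = ∑ y ∈ S x, Wopt x y * (Real.log (Wopt x y) - Real.log (M x y)) := by
          have hsp := Finset.sum_filter_add_sum_filter_not Finset.univ
            (fun y => 0 < Wopt x y)
            (fun y => Wopt x y * Real.log (Wopt x y / M x y))
          have hz : ∑ y ∈ Finset.univ.filter (fun y => ¬ 0 < Wopt x y),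
              Wopt x y * Real.log (Wopt x y / M x y) = 0 := by
            apply Finset.sum_eq_zero
            intro y hy
            rw [hW0 x y (Finset.mem_filter.mp hy).2]
            ring
          have hSxeq : Finset.univ.filter (fun y => 0 < Wopt x y) = S x := by rw [hSdef]
          rw [hSxeq, hz, add_zero] at hsp
          rw [← hsp]
          apply Finset.sum_congr rfl
          intro y hy
          have hWy := (hSmem x y).mp hy
          have hQy := hQW x y h hWy
          have hMy := hMpos x y hQy
          rw [Real.log_div hWy.ne' hMy.ne']
        rw [hKLrw]
        have hMterm : ∑ y ∈ S x, M x y * (Real.log (Wopt x y) - Real.log (M x y)) ≤ 0 := by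
          have hle : ∀ y ∈ S x, M x y * (Real.log (Wopt x y) - Real.log (M x y))
              ≤ Wopt x y - M x y := by
            intro y hy
            have hWy := (hSmem x y).mp hy
            have hQy := hQW x y h hWy
            have hMy := hMpos x y hQy
            have hli := aux_log_ineq hMy hWy
            rw [Real.log_div hMy.ne' hWy.ne'] at hli
            nlinarith
          calc ∑ y ∈ S x, M x y * (Real.log (Wopt x y) - Real.log (M x y))
              ≤ ∑ y ∈ S x, (Wopt x y - M x y) := Finset.sum_le_sum hle
            _ = 0 := by rw [Finset.sum_sub_distrib, hWS, hMS]; ring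
        have hdecomp : ∑ y ∈ S x, (M x y - Wopt x y) *
            (Real.log (Wopt x y) - Real.log (M x y))
            = (∑ y ∈ S x, M x y * (Real.log (Wopt x y) - Real.log (M x y)))
              - ∑ y ∈ S x, Wopt x y * (Real.log (Wopt x y) - Real.log (M x y)) := by
          rw [← Finset.sum_sub_distrib]
          apply Finset.sum_congr rfl
          intro y _
          ring
        rw [hdecomp]
        linarith
    have hG0 : G 0 = mutInfo P Wopt + lam * dst Wopt := by
      have h1 := hE1 0 le_rfl zero_lt_one
      have h2 : (∑ x, ∑ y, P x * (Vf 0 x y * Real.log (Vf 0 x y / Q y)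
          + lam * d x y * Vf 0 x y))
          = mutInfo P Wopt + lam * dst Wopt := by
        have h3 : (∑ x, ∑ y, P x * (Vf 0 x y * Real.log (Vf 0 x y / Q y)
            + lam * d x y * Vf 0 x y))
            = ∑ x, ∑ y, P x * (Wopt x y * Real.log (Wopt x y / Q y)
              + lam * d x y * Wopt x y) := by
          apply Finset.sum_congr rfl; intro x _
          apply Finset.sum_congr rfl; intro y _
          rw [hVf0 x y]
        rw [h3, hsplit Wopt Q, ← hmut]
      rw [h2] at h1
      simp only [Real.log_zero, mul_zero, zero_mul, add_zero] at h1
      linarith [h1]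
    have htends : Tendsto (fun s => (G s - G 0) / s) (nhdsWithin (0:ℝ) (Set.Ioi 0))
        (nhds Gd) := by
      have h := hasDerivAt_iff_tendsto_slope.mp hE2
      have h2 := h.mono_left (nhdsWithin_mono 0
        (fun z hz => Set.mem_compl_singleton_iff.mpr (ne_of_gt hz)))
      apply h2.congr
      intro s
      rw [slope_def_field, sub_zero]
    have hup : ∀ᶠ s in nhdsWithin (0:ℝ) (Set.Ioi 0),
        G s + (s * Real.log s) * μ + s * ν - G 0 ≤ -(s * (c/2)) := by
      rcases eq_or_lt_of_le hμnonneg with hμ | hμ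
      · have hG' := hE3 hμ.symm
        have hν := hνzero hμ.symm
        have hev := htends.eventually_lt_const (show Gd < -(c/2) by linarith)
        filter_upwards [hev, self_mem_nhdsWithin] with s hs hs0
        have hs0' : (0:ℝ) < s := hs0
        have hmul : (G s - G 0) / s * s < -(c/2) * s :=
          mul_lt_mul_of_pos_right hs hs0'
        rw [div_mul_cancel₀ _ hs0'.ne'] at hmul
        rw [← hμ, hν]
        nlinarith
      · have hΨ : Tendsto (fun s => ((G s - G 0)/s + ν) + Real.log s * μ)
            (nhdsWithin (0:ℝ) (Set.Ioi 0)) atBot := by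
          apply Filter.Tendsto.add_atBot (htends.add tendsto_const_nhds)
          exact Real.tendsto_log_nhdsGT_zero.atBot_mul_const hμ
        have hev := hΨ.eventually (eventually_le_atBot (-(c/2)))
        filter_upwards [hev, self_mem_nhdsWithin] with s hs hs0
        have hs0' : (0:ℝ) < s := hs0
        have heqs : G s + (s * Real.log s) * μ + s * ν - G 0
            = s * (((G s - G 0)/s + ν) + Real.log s * μ) := by
          field_simp
          ring
        rw [heqs]
        calc s * (((G s - G 0)/s + ν) + Real.log s * μ) ≤ s * (-(c/2)) :=
              mul_le_mul_of_nonneg_left hs hs0'.le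
          _ = -(s * (c/2)) := by ring
    have hG0F : G 0 = RDfun P d D + lam * D := by
      rw [hG0, hWopt]
      nlinarith [hslack]
    have hkey : ∀ᶠ s in nhdsWithin (0:ℝ) (Set.Ioi 0), s * (c/2) ≤ |A s| := by
      filter_upwards [hAev, hup,
        Ioo_mem_nhdsGT_of_mem (Set.mem_Ico.mpr ⟨le_refl (0:ℝ), zero_lt_one⟩)] with s h1 h2 hs
      have hchs := hVch s ⟨hs.1.le, hs.2.le⟩
      have habsQV : ∀ y, 0 < outMarg P (Vf s) y → 0 < Q y := by
        intro y hy
        rcases (hQ0 y).lt_or_eq with hq | hq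
        · exact hq
        · exfalso
          have hQy' : ∑ x, P x * Wopt x y = 0 := hq.symm
          have hPW := (Finset.sum_eq_zero_iff_of_nonneg
            (fun x _ => mul_nonneg (hP0 x) ((hWch x).1 y))).mp hQy'
          have hout : outMarg P (Vf s) y = 0 := by
            apply Finset.sum_eq_zero
            intro x _
            have h5 := hPW x (Finset.mem_univ x)
            have h6 := hMzero x y hq.symm
            rw [hVfx, h6]
            linear_combination (1 - s) * h5
          rw [hout] at hy
          exact lt_irrefl 0 hy
      have hmle := aux_mutInfo_le P hP0 hP1 (Vf s) hchs Q hQ0 hQ1 habsQV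
      have hcross := (hsplit (Vf s) Q).symm
      have hEq1 := hE1 s hs.1.le hs.2
      have hchain : mutInfo P (Vf s) + lam * dst (Vf s)
          ≤ RDfun P d D + lam * D - s * (c/2) := by
        have e1 : mutInfo P (Vf s) + lam * dst (Vf s)
            ≤ (∑ x, ∑ y, P x * Vf s x y * Real.log (Vf s x y / Q y)) + lam * dst (Vf s) := by
          linarith [hmle]
        rw [hcross] at e1
        rw [hEq1] at e1
        linarith [h2, hG0F.symm.le, hG0F.le]
      linarith [le_abs_self (A s)]
    exact aux_engine (half_pos hcpos) hAo hkey
  have hceq : c = 0 := le_antisymm hcle hc0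
  have goalA : RDfun P d D = ∑ x, P x * j x := by
    rw [← hWopt, hRc, hceq]
    linear_combination hslack
  have hWM : ∀ x, 0 < P x → ∀ y, Wopt x y = M x y := by
    intro x hPx
    have hceq' : ∑ x, P x * ∑ y, Wopt x y * Real.log (Wopt x y / M x y) = 0 := by
      rw [← hcdef]; exact hceq
    have hterms : ∀ x' ∈ Finset.univ,
        0 ≤ P x' * ∑ y, Wopt x' y * Real.log (Wopt x' y / M x' y) := by
      intro x' _
      rcases eq_or_lt_of_le (hP0 x') with h | h
      · rw [← h]; simp
      · exact mul_nonneg h.le (aux_gibbs (Wopt x') (M x') ((hWch x').1) (hM0 x')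
          ((hWch x').2) (hMsum x') (fun y hy => hMpos x' y (hQW x' y h hy))).1
    have hx0 := (Finset.sum_eq_zero_iff_of_nonneg hterms).mp hceq' x (Finset.mem_univ x)
    have hKL : ∑ y, Wopt x y * Real.log (Wopt x y / M x y) = 0 := by
      rcases mul_eq_zero.mp hx0 with h | h
      · exact absurd h hPx.ne'
      · exact h
    exact (aux_gibbs (Wopt x) (M x) ((hWch x).1) (hM0 x) ((hWch x).2) (hMsum x)
      (fun y hy => hMpos x y (hQW x y hPx hy))).2 hKL
  have heq : ∀ yh, 0 < Q yh → ∑ x, P x * (E x yh / g x) = 1 := by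
    intro yh hQy
    have h1 : Q yh = ∑ x, P x * Wopt x yh := rfl
    have h2 : ∑ x, P x * Wopt x yh = ∑ x, P x * M x yh := by
      apply Finset.sum_congr rfl
      intro x _
      rcases eq_or_lt_of_le (hP0 x) with h | h
      · rw [← h]; ring
      · rw [hWM x h yh]
    have h3 : ∑ x, P x * M x yh = Q yh * ∑ x, P x * (E x yh / g x) := by
      rw [Finset.mul_sum]
      apply Finset.sum_congr rfl
      intro x _
      rw [hMx x yh]
      ring
    have h4 : Q yh * 1 = Q yh * ∑ x, P x * (E x yh / g x) := by
      rw [mul_one, ← h3, ← h2, ← h1]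
    exact (mul_left_cancel₀ hQy.ne' h4).symm
  have hineq : ∀ yh, ∑ x, P x * (E x yh / g x) ≤ 1 := by
    intro yh
    rcases (hQ0 yh).lt_or_eq with hQy | hQy
    · exact le_of_eq (heq yh hQy)
    · rcases eq_or_lt_of_le hlam0 with hl0 | hlpos
      · -- lam = 0 : everything is trivial
        have hgone : ∀ x, g x = 1 := by
          intro x
          have hterm : ∀ y, Q y * E x y = Q y := by
            intro y
            rw [hEx, ← hl0]
            norm_num
          calc g x = ∑ y, Q y * E x y := rfl
            _ = ∑ y, Q y := Finset.sum_congr rfl (fun y _ => hterm y)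
            _ = 1 := hQ1
        have hEone : ∀ x, E x yh = 1 := by
          intro x; rw [hEx, ← hl0]; norm_num
        apply le_of_eq
        calc ∑ x, P x * (E x yh / g x) = ∑ x, P x := by
              apply Finset.sum_congr rfl
              intro x _
              rw [hEone x, hgone x]
              norm_num
          _ = 1 := hP1
      · -- lam > 0 : the main perturbation argument
        have hdd : dst Wopt = D := by
          rcases mul_eq_zero.mp hslack with h | h
          · exact absurd h hlpos.ne'
          · linarith
        by_contra hTgt
        push_neg at hTgt
        set T' : ℝ := ∑ x, P x * (E x yh / g x) with hT'def
        set g1 : ℝ → 𝒳 → ℝ := fun s x => (1 - s) * g x + s * E x yh with hg1def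
        have hg1x : ∀ s x, g1 s x = (1 - s) * g x + s * E x yh := fun _ _ => rfl
        have hg10 : ∀ x, g1 0 x = g x := by intro x; rw [hg1x]; ring
        have hg1pos : ∀ s, 0 ≤ s → s < 1 → ∀ x, 0 < g1 s x := by
          intro s h0 h1 x
          rw [hg1x]
          nlinarith [hgpos x, hE x yh]
        set Qs : ℝ → Xh → ℝ :=
          fun s y => (1 - s) * Q y + s * (if y = yh then 1 else 0) with hQsdef
        have hQsx : ∀ s y, Qs s y = (1 - s) * Q y + s * (if y = yh then 1 else 0) :=
          fun _ _ => rfl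
        have hQs0 : ∀ s, 0 ≤ s → s ≤ 1 → ∀ y, 0 ≤ Qs s y := by
          intro s h0 h1 y
          rw [hQsx]
          have hq := hQ0 y
          by_cases hyy : y = yh <;> simp [hyy] <;> nlinarith
        have hQs1 : ∀ s, ∑ y, Qs s y = 1 := by
          intro s
          calc ∑ y, Qs s y
              = (1 - s) * ∑ y, Q y + s * ∑ y, (if y = yh then (1:ℝ) else 0) := by
                rw [Finset.mul_sum, Finset.mul_sum, ← Finset.sum_add_distrib]
            _ = 1 := by
                rw [hQ1, Finset.sum_ite_eq' Finset.univ yh (fun _ => (1:ℝ))]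
                simp
        set V2 : ℝ → 𝒳 → Xh → ℝ := fun s x y => Qs s y * E x y / g1 s x with hV2def
        have hV2x : ∀ s x y, V2 s x y = Qs s y * E x y / g1 s x := fun _ _ _ => rfl
        have hnum : ∀ s x, ∑ y, Qs s y * E x y = g1 s x := by
          intro s x
          have hsum_ite : ∑ y, (if y = yh then (1:ℝ) else 0) * E x y = E x yh := by
            have hterm : ∀ y, (if y = yh then (1:ℝ) else 0) * E x y
                = (if y = yh then E x y else 0) := by
              intro y
              by_cases hyy : y = yh <;> simp [hyy]
            rw [Finset.sum_congr rfl (fun y _ => hterm y),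
              Finset.sum_ite_eq' Finset.univ yh (fun y => E x y)]
            simp
          calc ∑ y, Qs s y * E x y
              = (1 - s) * ∑ y, Q y * E x y
                + s * ∑ y, (if y = yh then (1:ℝ) else 0) * E x y := by
                rw [Finset.mul_sum, Finset.mul_sum, ← Finset.sum_add_distrib]
                apply Finset.sum_congr rfl; intro y _; rw [hQsx]; ring
            _ = g1 s x := by
                rw [hsum_ite, hg1x]
        have hV2ch : ∀ s, 0 ≤ s → s < 1 → IsChannel (V2 s) := by
          intro s h0 h1 x
          constructor
          · intro y
            rw [hV2x]
            apply div_nonneg _ (hg1pos s h0 h1 x).le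
            exact mul_nonneg (hQs0 s h0 h1.le y) (hE x y).le
          · rw [show (∑ y, V2 s x y) = (∑ y, Qs s y * E x y) / g1 s x from by
              rw [← Finset.sum_div]]
            rw [hnum s x, div_self (hg1pos s h0 h1 x).ne']
        set hfun : ℝ → ℝ := fun s => lam * D - ∑ x, P x * Real.log (g1 s x) with hfundef
        have hfunx : ∀ s, hfun s = lam * D - ∑ x, P x * Real.log (g1 s x) := fun _ => rfl
        have hfun0 : hfun 0 = RDfun P d D + lam * D := by
          rw [hfunx, goalA]
          have h5 : ∑ x, P x * Real.log (g1 0 x) = -∑ x, P x * j x := by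
            rw [← Finset.sum_neg_distrib]
            apply Finset.sum_congr rfl
            intro x _
            rw [hg10 x, hjx x]
            ring
          rw [h5]
          ring
        have hder : HasDerivAt hfun (1 - T') 0 := by
          have hsum : HasDerivAt (fun s => ∑ x, P x * Real.log (g1 s x))
              (∑ x, P x * ((E x yh - g x) / g x)) 0 := by
            apply HasDerivAt.fun_sum
            intro x _
            apply HasDerivAt.const_mul
            have hg1d : HasDerivAt (fun s => g1 s x) (E x yh - g x) 0 := haff 0 _ _
            have hlg := hg1d.log (by rw [hg10 x]; exact (hgpos x).ne')
            rw [hg10 x] at hlg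
            exact hlg
          have hfinal := hsum.const_sub (lam * D)
          have h6 : ∑ x, P x * ((E x yh - g x) / g x) = T' - 1 := by
            calc ∑ x, P x * ((E x yh - g x) / g x)
                = ∑ x, (P x * (E x yh / g x) - P x) := by
                  apply Finset.sum_congr rfl
                  intro x _
                  rw [sub_div, div_self (hgpos x).ne']
                  ring
              _ = T' - 1 := by rw [Finset.sum_sub_distrib, hP1, ← hT'def]
          have h7 : (1 - T') = -(∑ x, P x * ((E x yh - g x) / g x)) := by rw [h6]; ring
          rw [h7]
          exact hfinal
        have hupper : ∀ s, 0 ≤ s → s < 1 →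
            mutInfo P (V2 s) + lam * dst (V2 s) ≤ hfun s := by
          intro s h0 h1
          have habs2 : ∀ y, 0 < outMarg P (V2 s) y → 0 < Qs s y := by
            intro y hy
            rcases (hQs0 s h0 h1.le y).lt_or_eq with h | h
            · exact h
            · exfalso
              have hz : outMarg P (V2 s) y = 0 := by
                apply Finset.sum_eq_zero
                intro x _
                rw [hV2x, ← h]
                simp
              rw [hz] at hy
              exact lt_irrefl 0 hy
          have hmle := aux_mutInfo_le P hP0 hP1 (V2 s) (hV2ch s h0 h1) (Qs s)
            (hQs0 s h0 h1.le) (hQs1 s) habs2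
          have hcross : ∑ x, ∑ y, P x * (V2 s x y * Real.log (V2 s x y / Qs s y)
              + lam * d x y * V2 s x y) = hfun s := by
            have hper : ∀ x, ∑ y, P x * (V2 s x y * Real.log (V2 s x y / Qs s y)
                + lam * d x y * V2 s x y)
                = P x * (lam * D - Real.log (g1 s x)) := by
              intro x
              have hterm : ∀ y, P x * (V2 s x y * Real.log (V2 s x y / Qs s y)
                  + lam * d x y * V2 s x y)
                  = P x * (lam * D - Real.log (g1 s x)) * V2 s x y := by
                intro y
                rcases (hQs0 s h0 h1.le y).lt_or_eq with hq | hq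
                · have hV2pos : 0 < V2 s x y := by
                    rw [hV2x]
                    exact div_pos (mul_pos hq (hE x y)) (hg1pos s h0 h1 x)
                  have hlogV : Real.log (V2 s x y / Qs s y)
                      = (lam * D - lam * d x y) - Real.log (g1 s x) := by
                    rw [hV2x]
                    have hsimp : Qs s y * E x y / g1 s x / Qs s y = E x y / g1 s x := by
                      rw [mul_div_assoc, mul_div_cancel_left₀ _ hq.ne']
                    rw [hsimp, Real.log_div (hE x y).ne' (hg1pos s h0 h1 x).ne',
                      hEx x y, Real.log_exp]
                  rw [hlogV]
                  ring
                · have hz : V2 s x y = 0 := by rw [hV2x, ← hq]; simp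
                  rw [hz]
                  ring
              calc ∑ y, P x * (V2 s x y * Real.log (V2 s x y / Qs s y)
                  + lam * d x y * V2 s x y)
                  = ∑ y, P x * (lam * D - Real.log (g1 s x)) * V2 s x y :=
                    Finset.sum_congr rfl (fun y _ => hterm y)
                _ = P x * (lam * D - Real.log (g1 s x)) * ∑ y, V2 s x y := by
                    rw [Finset.mul_sum]
                _ = P x * (lam * D - Real.log (g1 s x)) := by
                    rw [(hV2ch s h0 h1 x).2, mul_one]
            rw [hfunx]
            calc ∑ x, ∑ y, P x * (V2 s x y * Real.log (V2 s x y / Qs s y)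
                + lam * d x y * V2 s x y)
                = ∑ x, P x * (lam * D - Real.log (g1 s x)) :=
                  Finset.sum_congr rfl (fun x _ => hper x)
              _ = (∑ x, P x) * (lam * D) - ∑ x, P x * Real.log (g1 s x) := by
                  rw [Finset.sum_mul, ← Finset.sum_sub_distrib]
                  apply Finset.sum_congr rfl; intro x _; ring
              _ = lam * D - ∑ x, P x * Real.log (g1 s x) := by rw [hP1]; ring
          have hsp := hsplit (V2 s) (Qs s)
          calc mutInfo P (V2 s) + lam * dst (V2 s)
              ≤ (∑ a, ∑ b, P a * V2 s a b * Real.log (V2 s a b / Qs s b))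
                + lam * dst (V2 s) := add_le_add_left hmle _
            _ = ∑ x, ∑ y, P x * (V2 s x y * Real.log (V2 s x y / Qs s y)
                + lam * d x y * V2 s x y) := hsp.symm
            _ = hfun s := hcross
        have hdstV20 : dst (V2 0) = D := by
          rw [← hdd, hdstW (V2 0), hdstW Wopt]
          apply Finset.sum_congr rfl
          intro x _
          apply Finset.sum_congr rfl
          intro y _
          rcases eq_or_lt_of_le (hP0 x) with h | h
          · rw [← h]; ring
          · have hV20 : V2 0 x y = M x y := by
              rw [hV2x, hMx, hQsx, hg10]
              ring
            rw [hV20, hWM x h y]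
        have hdstdiff : ∃ k, HasDerivAt (fun s => dst (V2 s)) k 0 := by
          refine ⟨∑ x, ∑ y, P x * ((((if y = yh then (1:ℝ) else 0) - Q y) * E x y * g1 0 x
              - Qs 0 y * E x y * (E x yh - g x)) / g1 0 x ^ 2) * d x y, ?_⟩
          show HasDerivAt (fun s => ∑ x, ∑ y, P x * (Qs s y * E x y / g1 s x) * d x y) _ 0
          apply HasDerivAt.fun_sum
          intro x _
          apply HasDerivAt.fun_sum
          intro y _
          have hnum' : HasDerivAt (fun s => Qs s y * E x y)
              (((if y = yh then (1:ℝ) else 0) - Q y) * E x y) 0 :=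
            (haff 0 (Q y) (if y = yh then (1:ℝ) else 0)).mul_const (E x y)
          have hden : HasDerivAt (fun s => g1 s x) (E x yh - g x) 0 := haff 0 _ _
          have hdiv := hnum'.div hden (by rw [hg10 x]; exact (hgpos x).ne')
          exact (hdiv.const_mul (P x)).mul_const (d x y)
        obtain ⟨A2, hA2o, hA2ev⟩ := hlowgen V2
          (fun s hs => hV2ch s hs.1.le hs.2) hdstdiff hdstV20
        have hslope := hasDerivAt_iff_tendsto_slope.mp hder
        have hslope2 := hslope.mono_left (nhdsWithin_mono 0
          (fun z hz => Set.mem_compl_singleton_iff.mpr (ne_of_gt hz)))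
        have hslope3 : Tendsto (fun s => (hfun s - hfun 0) / s)
            (nhdsWithin (0:ℝ) (Set.Ioi 0)) (nhds (1 - T')) :=
          hslope2.congr (fun s => by rw [slope_def_field, sub_zero])
        have hev := hslope3.eventually_lt_const (show 1 - T' < (1 - T')/2 by
          rw [hT'def] at *
          linarith)
        have hkey : ∀ᶠ s in nhdsWithin (0:ℝ) (Set.Ioi 0), s * ((T' - 1)/2) ≤ |A2 s| := by
          filter_upwards [hA2ev, hev,
            Ioo_mem_nhdsGT_of_mem (Set.mem_Ico.mpr ⟨le_refl (0:ℝ), zero_lt_one⟩),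
            self_mem_nhdsWithin] with s h1 h2 hs hs0
          have hs0' : (0:ℝ) < s := hs0
          have hup := hupper s hs.1.le hs.2
          have h3 : hfun s - hfun 0 ≤ (1 - T')/2 * s := (div_le_iff₀ hs0').mp h2.le
          have h4 := le_abs_self (A2 s)
          rw [hfun0] at h3
          have h5 : RDfun P d D + lam * D - A2 s ≤ hfun s := le_trans h1 hup
          have h6 : s * ((T' - 1)/2) ≤ A2 s := by
            have h7 : -((1 - T')/2 * s) ≤ A2 s := by
              clear_value T' hfun
              linarith
            have h8 : s * ((T' - 1)/2) = -((1 - T')/2 * s) := by ring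
            rw [h8]
            exact h7
          linarith
        exact aux_engine (show (0:ℝ) < (T' - 1)/2 by linarith) hA2o hkey
  have hgoalfix : ∀ yh, (∑ x, P x * Real.exp (lam * D - lam * d x yh + dtilted d D Q lam x))
      = ∑ x, P x * (E x yh / g x) := by
    intro yh
    apply Finset.sum_congr rfl
    intro x _
    rw [hjd x, hexp x yh]
  refine ⟨?_, ?_, ?_⟩
  · rw [goalA]
    apply Finset.sum_congr rfl
    intro x _
    rw [hjd x]
  · intro yh; rw [hgoalfix yh]; exact hineq yh
  · intro yh hy; rw [hgoalfix yh]; exact heq yh hy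

end
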